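/- Let (Π_max, H_max, Λ_max) be a maximal solution of AΠ + BH = ΠΛ, CΠ + DH = 0. If vectors x, x₊ and input u satisfy x₊ = Ax + Bu, 0 = Cx + Du, and x₊ ∈ Im Π_max, then x ∈ Im Π_max. -/

import Mathlib

open Matrix

noncomputable section

/-- Map a complex matrix entrywise to rational functions. -/
def mc {a b : ℕ} (M : Matrix (Fin a) (Fin b) ℂ) : Matrix (Fin a) (Fin b) (RatFunc ℂ) :=
  M.map (⇑(RatFunc.C : ℂ →+* RatFunc ℂ))

/-- The resolvent `(z I − M)⁻¹` as a matrix of rational functions. -/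
def res {a : ℕ} (M : Matrix (Fin a) (Fin a) ℂ) : Matrix (Fin a) (Fin a) (RatFunc ℂ) :=
  ((Matrix.scalar (Fin a) (RatFunc.X : RatFunc ℂ)) - mc M)⁻¹

/-- The "anti-resolvent" `(z I + M)⁻¹`, used for para-hermitian conjugates. -/
def resneg {a : ℕ} (M : Matrix (Fin a) (Fin a) ℂ) : Matrix (Fin a) (Fin a) (RatFunc ℂ) :=
  ((Matrix.scalar (Fin a) (RatFunc.X : RatFunc ℂ)) + mc M)⁻¹

/-- Observability of a pair `(C, A)`. -/
def Observable {p n : ℕ} (C : Matrix (Fin p) (Fin n) ℂ) (A : Matrix (Fin n) (Fin n) ℂ) : Prop :=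
  ∀ v : Fin n → ℂ, (∀ k : ℕ, C *ᵥ ((A ^ k) *ᵥ v) = 0) → v = 0

/-- Controllability of a pair `(Λ, G)`. -/
def Controllable {r m : ℕ} (L : Matrix (Fin r) (Fin r) ℂ) (G : Matrix (Fin r) (Fin m) ℂ) : Prop :=
  ∀ y : Fin r → ℂ, (∀ k : ℕ, y ᵥ* ((L ^ k) * G) = 0) → y = 0

/-- The range (column space) of a matrix, as a submodule of `ℂⁿ`. -/
def mrange {a b : ℕ} (M : Matrix (Fin a) (Fin b) ℂ) : Submodule ℂ (Fin a → ℂ) :=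
  LinearMap.range M.mulVecLin

/-- The set of states reachable from the origin by a finite input sequence
producing identically zero output along the way (the minimal input-containing
subspace `C*(Σ)`). -/
def OutNullReach {n p q : ℕ} (A : Matrix (Fin n) (Fin n) ℂ) (B : Matrix (Fin n) (Fin q) ℂ)
    (C : Matrix (Fin p) (Fin n) ℂ) (D : Matrix (Fin p) (Fin q) ℂ) (x : Fin n → ℂ) : Prop :=
  ∃ (j : ℕ) (ξ : ℕ → (Fin n → ℂ)) (u : ℕ → (Fin q → ℂ)),
    ξ 0 = 0 ∧ (∀ i < j, ξ (i + 1) = A *ᵥ ξ i + B *ᵥ u i ∧ C *ᵥ ξ i + D *ᵥ u i = 0) ∧ ξ j = x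

/-- for a maximal solution, an output-nulling backward step stays in `Im Π_max`. -/
theorem stmt4 {n p q s : ℕ}
    (A : Matrix (Fin n) (Fin n) ℂ) (B : Matrix (Fin n) (Fin q) ℂ)
    (C : Matrix (Fin p) (Fin n) ℂ) (D : Matrix (Fin p) (Fin q) ℂ)
    (Pmax : Matrix (Fin n) (Fin s) ℂ) (Hmax : Matrix (Fin q) (Fin s) ℂ)
    (Λmax : Matrix (Fin s) (Fin s) ℂ)
    (h1 : A * Pmax + B * Hmax = Pmax * Λmax) (h2 : C * Pmax + D * Hmax = 0)
    (hmax : ∀ (t : ℕ) (P : Matrix (Fin n) (Fin t) ℂ) (H : Matrix (Fin q) (Fin t) ℂ)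
      (L : Matrix (Fin t) (Fin t) ℂ),
      A * P + B * H = P * L → C * P + D * H = 0 → mrange P ≤ mrange Pmax)
    (x xp : Fin n → ℂ) (u : Fin q → ℂ)
    (hx : xp = A *ᵥ x + B *ᵥ u) (hy : C *ᵥ x + D *ᵥ u = 0)
    (hxp : ∃ ξ : Fin s → ℂ, Pmax *ᵥ ξ = xp) :
    ∃ ξ : Fin s → ℂ, Pmax *ᵥ ξ = x := by
  obtain ⟨ξ₀, hξ₀⟩ := hxp
  set P' : Matrix (Fin n) (Fin (s+1)) ℂ :=
    fun i j => Fin.lastCases (x i) (fun j' => Pmax i j') j with hP'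
  set H' : Matrix (Fin q) (Fin (s+1)) ℂ :=
    fun i j => Fin.lastCases (u i) (fun j' => Hmax i j') j with hH'
  set L' : Matrix (Fin (s+1)) (Fin (s+1)) ℂ :=
    fun i j => Fin.lastCases (0 : ℂ)
      (fun i' => Fin.lastCases (ξ₀ i') (fun j' => Λmax i' j') j) i with hL'
  have e1 : A * P' + B * H' = P' * L' := by
    ext i j
    refine Fin.lastCases ?_ ?_ j
    · have hxi : (A *ᵥ x + B *ᵥ u) i = (Pmax *ᵥ ξ₀) i := by rw [← hx, hξ₀]
      simp only [Matrix.add_apply, Matrix.mul_apply]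
      simp only [Matrix.add_apply, Matrix.mul_apply, hP', hH', hL',
        Fin.lastCases_last, Fin.sum_univ_castSucc, Fin.lastCases_castSucc,
        mul_zero, add_zero]
      simpa [Matrix.mulVec, dotProduct, Pi.add_apply, Matrix.mul_apply, Fin.sum_univ_castSucc] using hxi
    · intro j'
      have := congrFun (congrFun h1 i) j'
      simp only [Matrix.add_apply, Matrix.mul_apply] at this ⊢
      simp only [hP', hH', hL', Fin.lastCases_castSucc, Fin.sum_univ_castSucc,
        Fin.lastCases_last, mul_zero, add_zero]
      exact this
  have e2 : C * P' + D * H' = 0 := by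
    ext i j
    refine Fin.lastCases ?_ ?_ j
    · have := congrFun hy i
      simp only [Matrix.add_apply, Matrix.mul_apply]
      simp only [Matrix.add_apply, Matrix.mul_apply, Matrix.zero_apply,
        hP', hH', Fin.lastCases_last]
      simpa [Matrix.mulVec, dotProduct, Pi.add_apply, Matrix.mul_apply, Fin.sum_univ_castSucc] using this
    · intro j'
      have := congrFun (congrFun h2 i) j'
      simp only [Matrix.add_apply, Matrix.mul_apply, Matrix.zero_apply] at this ⊢
      simp only [hP', hH', Fin.lastCases_castSucc]
      exact this
  have hle := hmax (s+1) P' H' L' e1 e2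
  have hxmem : x ∈ mrange P' := by
    refine ⟨Pi.single (Fin.last s) 1, ?_⟩
    ext i
    simp only [Matrix.mulVecLin_apply]
    simp [Matrix.mulVecLin, Matrix.mulVec, dotProduct, Pi.single_apply,
      hP', Fin.lastCases_last]
  exact hle hxmem
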